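/- Fix x ∈ ℝⁿ, R² > 0, h ∈ ℝⁿ, and ε ∈ (0,1). Then there exists a center c ∈ ℝⁿ such that B(x, R²) ∩ B(x + h, (1 − ε)‖h‖²) ⊆ B(c, (1 − ε)R²), where B(z, r²) denotes the closed Euclidean ball of center z and squared radius r². -/

import Mathlib

theorem stmt8 (n : ℕ) (x h : EuclideanSpace ℝ (Fin n)) (R2 ε : ℝ)
    (hR2 : 0 < R2) (hε : ε ∈ Set.Ioo (0:ℝ) 1) :
    ∃ c : EuclideanSpace ℝ (Fin n), ∀ y : EuclideanSpace ℝ (Fin n),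
      ‖y - x‖^2 ≤ R2 → ‖y - (x + h)‖^2 ≤ (1 - ε) * ‖h‖^2 →
        ‖y - c‖^2 ≤ (1 - ε) * R2 := by
  obtain ⟨hε0, hε1⟩ := hε
  refine ⟨x + ε • h, fun y h1 h2 => ?_⟩
  have e1 : y - (x + h) = (y - x) - h := by abel
  have e2 : y - (x + ε • h) = (y - x) - ε • h := by abel
  rw [e1] at h2
  rw [e2]
  set u := y - x with hu
  have n1 : ‖u - h‖^2 = ‖u‖^2 - 2 * inner ℝ u h + ‖h‖^2 := by
    rw [@norm_sub_sq_real]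
  have n2 : ‖u - ε • h‖^2 = ‖u‖^2 - 2 * (ε * inner ℝ u h) + ε^2 * ‖h‖^2 := by
    rw [@norm_sub_sq_real, real_inner_smul_right, norm_smul, Real.norm_eq_abs,
      mul_pow, sq_abs]
  nlinarith [sq_nonneg (‖u‖ - ‖h‖), sq_nonneg ‖u‖, sq_nonneg ‖h‖]
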